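/- Let ψ : ℝ^d → ℝ ∪ {+∞} be a convex function, u a point with ψ(u) < ∞, f = e^{−ψ}, and fix v ∈ ℝ^d and ν ∈ ℝ. Then (v, ν) belongs to the Fréchet normal cone of the epigraph of ψ at (u, ψ(u)) if and only if (v, −ν/f(u)) belongs to the Fréchet normal cone of the lifting L_f at (u, f(u)). -/

import Mathlib

noncomputable section

private lemma abs_log_le' (r : ℝ) (hr : 1/2 ≤ r) : |Real.log r| ≤ 2 * |r - 1| := by
  have hr0 : 0 < r := by linarith
  rcases le_or_gt 1 r with h | h
  · have h0 : 0 ≤ Real.log r := Real.log_nonneg h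
    have h1 : Real.log r ≤ r - 1 := Real.log_le_sub_one_of_pos hr0
    rw [abs_of_nonneg h0, abs_of_nonneg (by linarith)]
    linarith
  · have h0 : Real.log r ≤ 0 := Real.log_nonpos (by linarith) (by linarith)
    have h1 : Real.log r⁻¹ ≤ r⁻¹ - 1 := Real.log_le_sub_one_of_pos (by positivity)
    rw [Real.log_inv] at h1
    have h1' : r * (-Real.log r) ≤ r * (r⁻¹ - 1) :=
      mul_le_mul_of_nonneg_left h1 hr0.le
    rw [mul_sub, mul_inv_cancel₀ hr0.ne'] at h1'
    rw [abs_of_nonpos h0, abs_of_nonpos (by linarith)]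
    nlinarith

private lemma pair_norm {d : ℕ} (x u : Fin d → ℝ) (y F : ℝ) :
    ‖((x, y) - (u, F) : (Fin d → ℝ) × ℝ)‖ = max ‖x - u‖ |y - F| := by
  rw [Prod.mk_sub_mk, Prod.norm_def]
  simp [Real.norm_eq_abs]

/-- The Fréchet normal cone of a set `A ⊆ ℝ^d × ℝ` at a point `p`. -/
def normalConePair {d : ℕ} (A : Set ((Fin d → ℝ) × ℝ)) (p : (Fin d → ℝ) × ℝ) :
    Set ((Fin d → ℝ) × ℝ) :=
  {v | ∀ ε > (0 : ℝ), ∃ δ > (0 : ℝ), ∀ a ∈ A, ‖a - p‖ ≤ δ →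
      dotProduct v.1 (a.1 - p.1) + v.2 * (a.2 - p.2) ≤ ε * ‖a - p‖}

/-- The lifting `L_f = {(x,y) : x ∈ cl(supp f), |y| ≤ f(x)}` of a function. -/
def lifting {d : ℕ} (f : (Fin d → ℝ) → ℝ) : Set ((Fin d → ℝ) × ℝ) :=
  {p | p.1 ∈ closure {x | 0 < f x} ∧ |p.2| ≤ f p.1}

set_option maxHeartbeats 1600000 in
/-- **Normal cones of the lifting of `f = e^{−ψ}` vs. normal cones of the epigraph of `ψ`.**
Here the convex function `ψ : ℝ^d → ℝ ∪ {+∞}` is encoded by a real-valued convex function on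
its effective domain `D`, and `f = e^{−ψ}` (extended by `0` outside `D`). -/
theorem normalCone_lifting_iff_epigraph {d : ℕ} (D : Set (Fin d → ℝ))
    (ψ : (Fin d → ℝ) → ℝ) (hψ : ConvexOn ℝ D ψ)
    (f : (Fin d → ℝ) → ℝ)
    (hf : f = D.indicator fun x => Real.exp (-ψ x))
    (u : Fin d → ℝ) (hu : u ∈ D) (v : Fin d → ℝ) (ν : ℝ) :
    (v, ν) ∈ normalConePair {p : (Fin d → ℝ) × ℝ | p.1 ∈ D ∧ ψ p.1 ≤ p.2} (u, ψ u) ↔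
      (v, -ν / f u) ∈ normalConePair (lifting f) (u, f u) := by
  have hfu : f u = Real.exp (-ψ u) := by rw [hf, Set.indicator_of_mem hu]
  set F : ℝ := Real.exp (-ψ u) with hFdef
  have hF0 : 0 < F := Real.exp_pos _
  have hfmem : ∀ x, 0 < f x → x ∈ D := by
    intro x hx
    by_contra hxD
    rw [hf, Set.indicator_of_notMem hxD] at hx
    exact lt_irrefl 0 hx
  have hfD : ∀ x ∈ D, f x = Real.exp (-ψ x) := by
    intro x hx; rw [hf, Set.indicator_of_mem hx]
  rw [hfu]
  constructor
  · -- epigraph → lifting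
    intro h ε hε
    set C : ℝ := max 1 (2 / F) with hC
    have hC1 : (1:ℝ) ≤ C := le_max_left _ _
    have hC0 : (0:ℝ) < C := lt_of_lt_of_le one_pos hC1
    have hC2 : 2 / F ≤ C := le_max_right _ _
    obtain ⟨δ₁, hδ₁, h1⟩ := h (ε / (2 * C)) (by positivity)
    have hνpos : (0:ℝ) < |ν| + 1 := by positivity
    refine ⟨min (min (δ₁ / C) (F / 2)) (ε * F ^ 2 / (8 * (|ν| + 1))), by positivity, ?_⟩
    rintro ⟨x, y⟩ ha hd
    obtain ⟨hx, hy⟩ : x ∈ closure {x | 0 < f x} ∧ |y| ≤ f x := ha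
    set δ : ℝ := min (min (δ₁ / C) (F / 2)) (ε * F ^ 2 / (8 * (|ν| + 1))) with hδdef
    rw [pair_norm] at hd
    have hyF : |y - F| ≤ δ := le_trans (le_max_right _ _) hd
    have hδF : δ ≤ F / 2 := le_trans (min_le_left _ _) (min_le_right _ _)
    have hδ1' : δ ≤ δ₁ / C := le_trans (min_le_left _ _) (min_le_left _ _)
    have hδε : δ ≤ ε * F ^ 2 / (8 * (|ν| + 1)) := min_le_right _ _
    clear_value δ
    have hy2 : F / 2 ≤ y := by
      have := abs_le.mp (le_trans hyF hδF)
      linarith [this.1]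
    have hy0 : 0 < y := by linarith
    have hyfx : y ≤ f x := le_trans (le_abs_self y) hy
    have hfx0 : 0 < f x := lt_of_lt_of_le hy0 hyfx
    have hxD : x ∈ D := hfmem x hfx0
    have hfx : f x = Real.exp (-ψ x) := hfD x hxD
    -- the corresponding epigraph point
    set t : ℝ := -(Real.log (y / F)) with htdef
    set ξ : ℝ := ψ u + t with hξdef
    have hr : 1/2 ≤ y / F := by
      rw [le_div_iff₀ hF0]; linarith
    have hr1 : |y / F - 1| = |y - F| / F := by
      rw [show y / F - 1 = (y - F) / F by field_simp, abs_div, abs_of_pos hF0]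
    have ht : |t| ≤ 2 / F * |y - F| := by
      rw [htdef, abs_neg]
      calc |Real.log (y / F)| ≤ 2 * |y / F - 1| := abs_log_le' _ hr
        _ = 2 / F * |y - F| := by rw [hr1]; ring
    have ht1 : |t| ≤ 1 := by
      calc |t| ≤ 2 / F * |y - F| := ht
        _ ≤ 2 / F * (F / 2) := by
            apply mul_le_mul_of_nonneg_left (le_trans hyF hδF) (by positivity)
        _ = 1 := by field_simp
    clear_value t ξ
    have hmem : (x, ξ) ∈ {p : (Fin d → ℝ) × ℝ | p.1 ∈ D ∧ ψ p.1 ≤ p.2} := by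
      refine ⟨hxD, ?_⟩
      show ψ x ≤ ξ
      have hlog : Real.log y ≤ Real.log (f x) := Real.log_le_log hy0 hyfx
      have h1 : ψ x = -(Real.log (f x)) := by
        rw [hfx, Real.log_exp]; ring
      have h2 : ξ = -(Real.log y) := by
        rw [hξdef, htdef, Real.log_div hy0.ne' hF0.ne', hFdef, Real.log_exp]; ring
      rw [h1, h2]; linarith
    have hM : (0:ℝ) ≤ max ‖x - u‖ |y - F| := le_trans (abs_nonneg _) (le_max_right _ _)
    have hnle : max ‖x - u‖ |t| ≤ C * max ‖x - u‖ |y - F| := by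
      apply max_le
      · calc ‖x - u‖ ≤ max ‖x - u‖ |y - F| := le_max_left _ _
          _ = 1 * max ‖x - u‖ |y - F| := (one_mul _).symm
          _ ≤ C * max ‖x - u‖ |y - F| := mul_le_mul_of_nonneg_right hC1 hM
      · calc |t| ≤ 2 / F * |y - F| := ht
          _ ≤ 2 / F * max ‖x - u‖ |y - F| :=
              mul_le_mul_of_nonneg_left (le_max_right _ _) (by positivity)
          _ ≤ C * max ‖x - u‖ |y - F| := mul_le_mul_of_nonneg_right hC2 hM
    have hndist : ‖((x, ξ) - (u, ψ u) : (Fin d → ℝ) × ℝ)‖ ≤ δ₁ := by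
      rw [pair_norm]
      have h2 : ξ - ψ u = t := by rw [hξdef]; ring
      rw [h2]
      calc max ‖x - u‖ |t| ≤ C * max ‖x - u‖ |y - F| := hnle
        _ ≤ C * δ := mul_le_mul_of_nonneg_left hd hC0.le
        _ ≤ C * (δ₁ / C) := mul_le_mul_of_nonneg_left hδ1' hC0.le
        _ = δ₁ := by field_simp
    have hkey := h1 (x, ξ) hmem hndist
    simp only at hkey
    rw [pair_norm] at hkey
    have h2 : ξ - ψ u = t := by rw [hξdef]; ring
    rw [h2] at hkey
    -- hkey : dot + ν * t ≤ ε/(2C) * max ‖x-u‖ |t|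
    have hy' : y = F * Real.exp (-t) := by
      have : Real.exp (-t) = y / F := by
        rw [htdef, neg_neg, Real.exp_log (by positivity)]
      rw [this]; field_simp
    have hexp : |Real.exp (-t) - 1 - -t| ≤ t ^ 2 := by
      have := Real.abs_exp_sub_one_sub_id_le (x := -t) (by rwa [abs_neg])
      rwa [neg_sq] at this
    -- main chain
    simp only
    rw [pair_norm]
    set M : ℝ := max ‖x - u‖ |y - F| with hMdef
    have hyFM : |y - F| ≤ M := le_max_right _ _
    have hxuM : ‖x - u‖ ≤ M := le_max_left _ _
    have hnle' : max ‖x - u‖ |t| ≤ C * M := hnle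
    clear_value M
    have htM : |t| ≤ 2 / F * M := le_trans ht (mul_le_mul_of_nonneg_left hyFM (by positivity))
    have hkey2 : dotProduct v (x - u) + ν * t ≤ ε / 2 * M := by
      calc dotProduct v (x - u) + ν * t
          ≤ ε / (2 * C) * max ‖x - u‖ |t| := hkey
        _ ≤ ε / (2 * C) * (C * M) := by
            apply mul_le_mul_of_nonneg_left hnle' (by positivity)
        _ = ε / 2 * M := by field_simp
    have hsplit : -ν / F * (y - F) = ν * t + (-ν) * (Real.exp (-t) - 1 - -t) := by
      rw [hy']; field_simp; ring
    have htδ : |t| ≤ 2 / F * δ := le_trans ht (mul_le_mul_of_nonneg_left (le_trans hyF le_rfl) (by positivity))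
    have herr : (-ν) * (Real.exp (-t) - 1 - -t) ≤ ε / 2 * M := by
      calc (-ν) * (Real.exp (-t) - 1 - -t) ≤ |ν| * t ^ 2 := by
            calc (-ν) * (Real.exp (-t) - 1 - -t)
                ≤ |(-ν) * (Real.exp (-t) - 1 - -t)| := le_abs_self _
              _ = |ν| * |Real.exp (-t) - 1 - -t| := by rw [abs_mul, abs_neg]
              _ ≤ |ν| * t ^ 2 := mul_le_mul_of_nonneg_left hexp (abs_nonneg _)
        _ = |ν| * (|t| * |t|) := by rw [abs_mul_abs_self]; ring
        _ ≤ |ν| * (2 / F * δ * (2 / F * M)) := by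
            apply mul_le_mul_of_nonneg_left _ (abs_nonneg _)
            exact mul_le_mul htδ htM (abs_nonneg _) ((abs_nonneg t).trans htδ)
        _ = |ν| * (4 / F ^ 2 * δ) * M := by ring
        _ ≤ ε / 2 * M := by
            apply mul_le_mul_of_nonneg_right _ hM
            have h3 : |ν| * (4 / F ^ 2 * δ) ≤ |ν| * (4 / F ^ 2 * (ε * F ^ 2 / (8 * (|ν| + 1)))) := by
              apply mul_le_mul_of_nonneg_left _ (abs_nonneg _)
              apply mul_le_mul_of_nonneg_left hδε (by positivity)
            have h4 : |ν| * (4 / F ^ 2 * (ε * F ^ 2 / (8 * (|ν| + 1)))) = |ν| / (|ν| + 1) * (ε / 2) := by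
              field_simp
              ring
            have h5 : |ν| / (|ν| + 1) ≤ 1 := by
              rw [div_le_one hνpos]; linarith
            have h6 : |ν| / (|ν| + 1) * (ε / 2) ≤ 1 * (ε / 2) :=
              mul_le_mul_of_nonneg_right h5 (by positivity)
            linarith
    calc dotProduct v (x - u) + -ν / F * (y - F)
        = (dotProduct v (x - u) + ν * t) + (-ν) * (Real.exp (-t) - 1 - -t) := by
          rw [hsplit]; ring
      _ ≤ ε / 2 * M + ε / 2 * M := add_le_add hkey2 herr
      _ = ε * M := by ring
  · -- lifting → epigraph
    intro h ε hε
    set μ : ℝ := -ν / F with hμdef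
    have hνμ : ν = -(μ * F) := by rw [hμdef]; field_simp
    set C : ℝ := max 1 (2 * F) with hC
    have hC1 : (1:ℝ) ≤ C := le_max_left _ _
    have hC0 : (0:ℝ) < C := lt_of_lt_of_le one_pos hC1
    have hC2 : 2 * F ≤ C := le_max_right _ _
    obtain ⟨δ₁, hδ₁, h1⟩ := h (ε / (2 * C)) (by positivity)
    clear_value μ
    have hμpos : (0:ℝ) < |μ| * F + 1 := by positivity
    refine ⟨min (min (δ₁ / C) 1) (ε / (2 * (|μ| * F + 1))), by positivity, ?_⟩
    rintro ⟨x, ξ⟩ ha hd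
    obtain ⟨hxD, hxi⟩ : x ∈ D ∧ ψ x ≤ ξ := ha
    set δ : ℝ := min (min (δ₁ / C) 1) (ε / (2 * (|μ| * F + 1))) with hδdef
    rw [pair_norm] at hd
    set t : ℝ := ξ - ψ u with htdef
    have htδ : |t| ≤ δ := le_trans (le_max_right _ _) hd
    have hδ1' : δ ≤ δ₁ / C := le_trans (min_le_left _ _) (min_le_left _ _)
    have hδle1 : δ ≤ 1 := le_trans (min_le_left _ _) (min_le_right _ _)
    have hδε : δ ≤ ε / (2 * (|μ| * F + 1)) := min_le_right _ _
    have ht1 : |t| ≤ 1 := le_trans htδ hδle1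
    clear_value δ
    set y : ℝ := F * Real.exp (-t) with hydef
    have hy0 : 0 < y := by positivity
    have hfx : f x = Real.exp (-ψ x) := hfD x hxD
    have hfx0 : 0 < f x := by rw [hfx]; positivity
    have hyfx : y ≤ f x := by
      rw [hydef, hfx, hFdef, ← Real.exp_add]
      apply Real.exp_le_exp.mpr
      rw [htdef]; linarith
    have hmem : (x, y) ∈ lifting f := by
      refine ⟨subset_closure hfx0, ?_⟩
      simpa [abs_of_pos hy0] using hyfx
    have heq : y - F = F * (Real.exp (-t) - 1) := by rw [hydef]; ring
    clear_value t y
    have hexp : |Real.exp (-t) - 1| ≤ 2 * |t| := by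
      have := Real.abs_exp_sub_one_le (x := -t) (by rwa [abs_neg])
      rwa [abs_neg] at this
    have hyF : |y - F| ≤ 2 * F * |t| := by
      calc |y - F| = F * |Real.exp (-t) - 1| := by
            rw [heq, abs_mul, abs_of_pos hF0]
        _ ≤ F * (2 * |t|) := mul_le_mul_of_nonneg_left hexp hF0.le
        _ = 2 * F * |t| := by ring
    have hM : (0:ℝ) ≤ max ‖x - u‖ |t| := le_trans (abs_nonneg _) (le_max_right _ _)
    set M : ℝ := max ‖x - u‖ |t| with hMdef
    have htM : |t| ≤ M := le_max_right _ _
    have hxuM : ‖x - u‖ ≤ M := le_max_left _ _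
    have hMδ : M ≤ δ := hd
    clear_value M
    have hnle : max ‖x - u‖ |y - F| ≤ C * M := by
      apply max_le
      · calc ‖x - u‖ ≤ M := hxuM
          _ = 1 * M := (one_mul _).symm
          _ ≤ C * M := mul_le_mul_of_nonneg_right hC1 hM
      · calc |y - F| ≤ 2 * F * |t| := hyF
          _ ≤ 2 * F * M := mul_le_mul_of_nonneg_left htM (by positivity)
          _ ≤ C * M := mul_le_mul_of_nonneg_right hC2 hM
    have hndist : ‖((x, y) - (u, F) : (Fin d → ℝ) × ℝ)‖ ≤ δ₁ := by
      rw [pair_norm]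
      calc max ‖x - u‖ |y - F| ≤ C * M := hnle
        _ ≤ C * δ := mul_le_mul_of_nonneg_left hd hC0.le
        _ ≤ C * (δ₁ / C) := mul_le_mul_of_nonneg_left hδ1' hC0.le
        _ = δ₁ := by field_simp
    have hkey := h1 (x, y) hmem hndist
    simp only at hkey
    rw [pair_norm] at hkey
    have hkey2 : dotProduct v (x - u) + μ * (y - F) ≤ ε / 2 * M := by
      calc dotProduct v (x - u) + μ * (y - F)
          ≤ ε / (2 * C) * max ‖x - u‖ |y - F| := hkey
        _ ≤ ε / (2 * C) * (C * M) := mul_le_mul_of_nonneg_left hnle (by positivity)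
        _ = ε / 2 * M := by field_simp
    have hexp2 : |Real.exp (-t) - 1 - -t| ≤ t ^ 2 := by
      have := Real.abs_exp_sub_one_sub_id_le (x := -t) (by rwa [abs_neg])
      rwa [neg_sq] at this
    have hsplit : ν * t = μ * (y - F) + (-(μ * F)) * (Real.exp (-t) - 1 - -t) := by
      rw [hνμ, heq]; ring
    have herr : (-(μ * F)) * (Real.exp (-t) - 1 - -t) ≤ ε / 2 * M := by
      calc (-(μ * F)) * (Real.exp (-t) - 1 - -t)
          ≤ |(-(μ * F)) * (Real.exp (-t) - 1 - -t)| := le_abs_self _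
        _ = |μ| * F * |Real.exp (-t) - 1 - -t| := by
            rw [abs_mul, abs_neg, abs_mul, abs_of_pos hF0]
        _ ≤ |μ| * F * t ^ 2 := mul_le_mul_of_nonneg_left hexp2 (by positivity)
        _ = |μ| * F * (|t| * |t|) := by rw [abs_mul_abs_self]; ring
        _ ≤ |μ| * F * (δ * M) := by
            apply mul_le_mul_of_nonneg_left _ (by positivity)
            exact mul_le_mul htδ htM (abs_nonneg _) ((abs_nonneg t).trans htδ)
        _ = |μ| * F * δ * M := by ring
        _ ≤ ε / 2 * M := by
            apply mul_le_mul_of_nonneg_right _ hM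
            have h3 : |μ| * F * δ ≤ |μ| * F * (ε / (2 * (|μ| * F + 1))) :=
              mul_le_mul_of_nonneg_left hδε (by positivity)
            have h4 : |μ| * F * (ε / (2 * (|μ| * F + 1))) ≤ ε / 2 := by
              rw [← mul_div_assoc, div_le_div_iff₀ (by positivity) two_pos]
              nlinarith [mul_nonneg hε.le (mul_nonneg (abs_nonneg μ) hF0.le)]
            linarith
    simp only
    rw [pair_norm, ← htdef, ← hMdef]
    calc dotProduct v (x - u) + ν * t
        = (dotProduct v (x - u) + μ * (y - F)) + (-(μ * F)) * (Real.exp (-t) - 1 - -t) := by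
          rw [hsplit]; ring
      _ ≤ ε / 2 * M + ε / 2 * M := add_le_add hkey2 herr
      _ = ε * M := by ring
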